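/- Let (X,d) be a metric space, M a nonempty proper closed subset of X, F : X∖M → (0,∞) a 1-Lipschitz function, and c ≥ 2, so that h_c(x,y) = log(1 + c·d(x,y)/√(F(x)·F(y))) is a metric on X∖M. Then the identity map 1 : (X∖M, d) → (X∖M, h_c) is a homeomorphism, and it is 1-quasiconformal: for every x ∈ X∖M, limsup_{r→0⁺} [ sup{ h_c(x,y) : y ∈ X∖M, d(x,y) ≤ r } / inf{ h_c(x,y) : y ∈ X∖M, d(x,y) ≥ r } ] ≤ 1. -/

import Mathlib

open Real Filter

/-- Generalized Dovgoshey–Hariri–Vuorinen function. -/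
noncomputable def hDHV {X : Type*} [MetricSpace X] (c : ℝ) (F : X → ℝ) (x y : X) : ℝ :=
  Real.log (1 + c * dist x y / Real.sqrt (F x * F y))

lemma mono_aux {a c r d : ℝ} (ha : 0 < a) (hc : 0 ≤ c) (hr : 0 ≤ r) (hrd : r ≤ d) :
    c * r / Real.sqrt (a * (a + r)) ≤ c * d / Real.sqrt (a * (a + d)) := by
  have h1 : 0 < Real.sqrt (a * (a + r)) := Real.sqrt_pos.2 (by nlinarith)
  have h2 : 0 < Real.sqrt (a * (a + d)) := Real.sqrt_pos.2 (by nlinarith)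
  rw [div_le_div_iff₀ h1 h2]
  have key : r * Real.sqrt (a * (a + d)) ≤ d * Real.sqrt (a * (a + r)) := by
    have e1 : r * Real.sqrt (a * (a + d)) = Real.sqrt (r ^ 2 * (a * (a + d))) := by
      rw [Real.sqrt_mul (sq_nonneg r), Real.sqrt_sq hr]
    have e2 : d * Real.sqrt (a * (a + r)) = Real.sqrt (d ^ 2 * (a * (a + r))) := by
      rw [Real.sqrt_mul (sq_nonneg d), Real.sqrt_sq (hr.trans hrd)]
    rw [e1, e2]
    apply Real.sqrt_le_sqrt
    have hd0 : 0 ≤ d - r := sub_nonneg.2 hrd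
    have hdr : 0 ≤ d + r := by linarith
    have t1 : 0 ≤ a * a * ((d - r) * (d + r)) :=
      mul_nonneg (mul_nonneg ha.le ha.le) (mul_nonneg hd0 hdr)
    have t2 : 0 ≤ a * (r * d * (d - r)) :=
      mul_nonneg ha.le (mul_nonneg (mul_nonneg hr (hr.trans hrd)) hd0)
    nlinarith [t1, t2]
  calc c * r * Real.sqrt (a * (a + d)) = c * (r * Real.sqrt (a * (a + d))) := by ring
    _ ≤ c * (d * Real.sqrt (a * (a + r))) := mul_le_mul_of_nonneg_left key hc
    _ = c * d * Real.sqrt (a * (a + r)) := by ring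

lemma log_ge_aux {s : ℝ} (hs : 0 ≤ s) : s / (1 + s) ≤ Real.log (1 + s) := by
  have h1 : (0:ℝ) < 1 + s := by linarith
  have h := Real.log_le_sub_one_of_pos (x := (1 + s)⁻¹) (by positivity)
  rw [Real.log_inv] at h
  have h2 : (1 + s)⁻¹ - 1 = -(s / (1 + s)) := by field_simp; ring
  linarith [h2 ▸ h]

lemma log_le_aux {s : ℝ} (hs : 0 ≤ s) : Real.log (1 + s) ≤ s := by
  have := Real.log_le_sub_one_of_pos (x := 1 + s) (by linarith)
  linarith


lemma alg_aux {a b t : ℝ} (ha : a ≠ 0) (hb : b ≠ 0) (ht : t ≠ 0) (htb : 1 + t / b ≠ 0) :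
    (t / a) / ((t / b) / (1 + t / b)) = b / a * (1 + t / b) := by
  field_simp



lemma part1 {X : Type*} [MetricSpace X] {M : Set X}
    {F : X → ℝ} (hFpos : ∀ x ∉ M, 0 < F x)
    (hFlip : ∀ x ∉ M, ∀ y ∉ M, |F x - F y| ≤ dist x y)
    {c : ℝ} (hc : 2 ≤ c) {x : X} (hx : x ∉ M) (u : ℕ → X) (hu : ∀ n, u n ∉ M) :
    Tendsto (fun n => dist (u n) x) atTop (nhds 0) ↔
      Tendsto (fun n => hDHV c F (u n) x) atTop (nhds 0) := by
  have hFx : 0 < F x := hFpos x hx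
  have hc0 : (0:ℝ) ≤ c := by linarith
  set s : ℕ → ℝ := fun n => c * dist (u n) x / Real.sqrt (F (u n) * F x) with hs
  have hsnn : ∀ n, 0 ≤ s n := fun n => by
    apply div_nonneg (by positivity) (Real.sqrt_nonneg _)
  have hhd : ∀ n, hDHV c F (u n) x = Real.log (1 + s n) := fun n => rfl
  constructor
  · intro hdist
    -- F (u n) → F x
    have hFu : Tendsto (fun n => F (u n)) atTop (nhds (F x)) := by
      rw [tendsto_iff_dist_tendsto_zero]
      apply squeeze_zero (fun n => dist_nonneg) (fun n => ?_) hdist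
      rw [Real.dist_eq]; exact hFlip _ (hu n) _ hx
    have hsqrt : Tendsto (fun n => Real.sqrt (F (u n) * F x)) atTop (nhds (F x)) := by
      have : Tendsto (fun n => F (u n) * F x) atTop (nhds (F x * F x)) :=
        hFu.mul tendsto_const_nhds
      have h2 := (Real.continuous_sqrt.tendsto (F x * F x)).comp this
      rwa [Real.sqrt_mul_self hFx.le] at h2
    have hstend : Tendsto s atTop (nhds 0) := by
      have hnum : Tendsto (fun n => c * dist (u n) x) atTop (nhds 0) := by
        have := hdist.const_mul c
        simpa using this
      have := hnum.div hsqrt hFx.ne'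
      rwa [zero_div] at this
    have harg : Tendsto (fun n => 1 + s n) atTop (nhds 1) := by
      have := hstend.const_add 1
      simpa using this
    have := ((Real.continuousAt_log one_ne_zero).tendsto).comp harg
    rw [Real.log_one] at this
    exact this
  · intro hlog
    have hexp := (Real.continuous_exp.tendsto 0).comp hlog
    rw [Real.exp_zero] at hexp
    have hexp' : Tendsto (fun n => 1 + s n) atTop (nhds 1) := by
      have heq : ∀ n, Real.exp (hDHV c F (u n) x) = 1 + s n := fun n => by
        rw [hhd]; exact Real.exp_log (by linarith [hsnn n])
      have hfe : (Real.exp ∘ fun n => hDHV c F (u n) x) = fun n => 1 + s n :=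
        funext heq
      rwa [hfe] at hexp
    have hstend : Tendsto s atTop (nhds 0) := by
      have := hexp'.sub_const 1
      simpa using this
    -- now conclude dist → 0
    rw [Metric.tendsto_atTop]
    intro ε hε
    have hδ : 0 < c * ε / Real.sqrt (F x * (F x + ε)) := by
      apply div_pos (by nlinarith) (Real.sqrt_pos.2 (by nlinarith))
    rw [Metric.tendsto_atTop] at hstend
    obtain ⟨N, hN⟩ := hstend _ hδ
    refine ⟨N, fun n hn => ?_⟩
    have hsn : s n < c * ε / Real.sqrt (F x * (F x + ε)) := by
      have := hN n hn
      rwa [Real.dist_eq, sub_zero, abs_of_nonneg (hsnn n)] at this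
    rw [Real.dist_eq, sub_zero, abs_of_nonneg dist_nonneg]
    by_contra hcon
    push_neg at hcon
    -- then s n ≥ c ε / sqrt ...
    set d := dist (u n) x with hd
    have hFub : F (u n) ≤ F x + d := by
      have := hFlip _ (hu n) _ hx
      have h2 := abs_le.1 this
      linarith [h2.1]
    have hFun : 0 < F (u n) := hFpos _ (hu n)
    have step1 : c * d / Real.sqrt (F x * (F x + d)) ≤ s n := by
      rw [hs]
      apply div_le_div_of_nonneg_left (by positivity) (Real.sqrt_pos.2 (by positivity))
      apply Real.sqrt_le_sqrt
      rw [mul_comm (F (u n)) (F x)]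
      exact mul_le_mul_of_nonneg_left hFub hFx.le
    have step2 := mono_aux hFx hc0 hε.le hcon
    linarith


lemma part2 {X : Type*} [MetricSpace X] {M : Set X}
    {F : X → ℝ} (hFpos : ∀ x ∉ M, 0 < F x)
    (hFlip : ∀ x ∉ M, ∀ y ∉ M, |F x - F y| ≤ dist x y)
    {c : ℝ} (hc : 2 ≤ c) {x : X} (hx : x ∉ M) :
    Filter.limsup
      (fun r : ℝ =>
        sSup ((fun y => hDHV c F x y) '' {y | y ∉ M ∧ dist x y ≤ r}) /
        sInf ((fun y => hDHV c F x y) '' {y | y ∉ M ∧ r ≤ dist x y}))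
      (nhdsWithin (0 : ℝ) (Set.Ioi 0)) ≤ 1 := by
  have hFx : 0 < F x := hFpos x hx
  have hc0 : (0:ℝ) < c := by linarith
  have hxx : hDHV c F x x = 0 := by simp [hDHV]
  by_cases hex : ∃ y, y ∉ M ∧ y ≠ x
  swap
  · -- X ∖ M = {x}
    push_neg at hex
    have hev : ∀ᶠ r in nhdsWithin (0:ℝ) (Set.Ioi 0),
        (sSup ((fun y => hDHV c F x y) '' {y | y ∉ M ∧ dist x y ≤ r}) /
          sInf ((fun y => hDHV c F x y) '' {y | y ∉ M ∧ r ≤ dist x y})) = (0:ℝ) := by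
      filter_upwards [self_mem_nhdsWithin] with r hr
      have hset : {y | y ∉ M ∧ dist x y ≤ r} = {x} := by
        ext y
        simp only [Set.mem_setOf_eq, Set.mem_singleton_iff]
        constructor
        · rintro ⟨hyM, -⟩; exact hex y hyM
        · rintro rfl; exact ⟨hx, by simp [le_of_lt (Set.mem_Ioi.1 hr)]⟩
      rw [hset, Set.image_singleton, csSup_singleton, hxx, zero_div]
    rw [Filter.limsup_congr hev]
    simp [Filter.limsup_const]
  · obtain ⟨y0, hy0M, hy0x⟩ := hex
    have hρ : 0 < dist x y0 := dist_pos.2 (fun h => hy0x h.symm)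
    set ρ := dist x y0 with hρdef
    set g : ℝ → ℝ := fun r => Real.sqrt (F x * (F x + r)) / Real.sqrt (F x * (F x - r)) *
      (1 + c * r / Real.sqrt (F x * (F x + r))) with hg
    -- tendsto of g to 1
    have h1 : Tendsto (fun r : ℝ => Real.sqrt (F x * (F x + r))) (nhds 0) (nhds (F x)) := by
      have hb : Tendsto (fun r : ℝ => F x * (F x + r)) (nhds 0) (nhds (F x * (F x + 0))) :=
        tendsto_const_nhds.mul (tendsto_const_nhds.add tendsto_id)
      have h2 := (Real.continuous_sqrt.tendsto _).comp hb
      simpa [Real.sqrt_mul_self hFx.le, Function.comp_def] using h2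
    have h2 : Tendsto (fun r : ℝ => Real.sqrt (F x * (F x - r))) (nhds 0) (nhds (F x)) := by
      have hb : Tendsto (fun r : ℝ => F x * (F x - r)) (nhds 0) (nhds (F x * (F x - 0))) :=
        tendsto_const_nhds.mul (tendsto_const_nhds.sub tendsto_id)
      have h2 := (Real.continuous_sqrt.tendsto _).comp hb
      simpa [Real.sqrt_mul_self hFx.le, Function.comp_def] using h2
    have h3 : Tendsto (fun r : ℝ => c * r / Real.sqrt (F x * (F x + r))) (nhds 0) (nhds 0) := by
      have hn : Tendsto (fun r : ℝ => c * r) (nhds 0) (nhds (c * 0)) :=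
        tendsto_const_nhds.mul tendsto_id
      rw [mul_zero] at hn
      have := hn.div h1 hFx.ne'
      rwa [zero_div] at this
    have htg : Tendsto g (nhdsWithin (0:ℝ) (Set.Ioi 0)) (nhds 1) := by
      have hmul : Tendsto (fun r : ℝ => Real.sqrt (F x * (F x + r)) / Real.sqrt (F x * (F x - r))
          * (1 + c * r / Real.sqrt (F x * (F x + r)))) (nhds 0)
          (nhds (F x / F x * (1 + 0))) :=
        (h1.div h2 hFx.ne').mul ((tendsto_const_nhds (x := (1:ℝ))).add h3)
      have h4 : F x / F x * (1 + 0) = 1 := by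
        rw [div_self hFx.ne']; ring
      rw [h4] at hmul
      exact hmul.mono_left nhdsWithin_le_nhds
    -- eventual bound
    have hbound : ∀ᶠ r in nhdsWithin (0:ℝ) (Set.Ioi 0),
        (sSup ((fun y => hDHV c F x y) '' {y | y ∉ M ∧ dist x y ≤ r}) /
          sInf ((fun y => hDHV c F x y) '' {y | y ∉ M ∧ r ≤ dist x y})) ≤ g r ∧
        0 ≤ (sSup ((fun y => hDHV c F x y) '' {y | y ∉ M ∧ dist x y ≤ r}) /
          sInf ((fun y => hDHV c F x y) '' {y | y ∉ M ∧ r ≤ dist x y})) := by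
      have hδ : 0 < min (F x / 2) ρ := lt_min (half_pos hFx) hρ
      filter_upwards [Ioo_mem_nhdsGT_of_mem ⟨le_refl 0, hδ⟩] with r hr
      obtain ⟨hr0, hrδ⟩ := hr
      have hrF : r < F x / 2 := lt_of_lt_of_le hrδ (min_le_left _ _)
      have hrρ : r < ρ := lt_of_lt_of_le hrδ (min_le_right _ _)
      have hsA : 0 < Real.sqrt (F x * (F x - r)) := Real.sqrt_pos.2 (by nlinarith)
      have hsB : 0 < Real.sqrt (F x * (F x + r)) := Real.sqrt_pos.2 (by nlinarith)
      set tA := c * r / Real.sqrt (F x * (F x - r)) with htA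
      set tB := c * r / Real.sqrt (F x * (F x + r)) with htB
      have htA0 : 0 < tA := div_pos (by positivity) hsA
      have htB0 : 0 < tB := div_pos (by positivity) hsB
      have hB0 : 0 < tB / (1 + tB) := div_pos htB0 (by linarith)
      -- sup bound
      have hsup : sSup ((fun y => hDHV c F x y) '' {y | y ∉ M ∧ dist x y ≤ r}) ≤ tA := by
        apply Real.sSup_le _ htA0.le
        rintro z ⟨y, ⟨hyM, hyd⟩, rfl⟩
        have hFy : 0 < F y := hFpos y hyM
        have hFylb : F x - r ≤ F y := by
          have := abs_le.1 (hFlip x hx y hyM)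
          linarith [this.2, hyd]
        have hsxy : c * dist x y / Real.sqrt (F x * F y) ≤ tA := by
          rw [htA]
          apply div_le_div₀ (by positivity) (by nlinarith [dist_nonneg (x := x) (y := y)])
            hsA
          exact Real.sqrt_le_sqrt (by nlinarith)
        have hnn : 0 ≤ c * dist x y / Real.sqrt (F x * F y) := by positivity
        calc hDHV c F x y ≤ c * dist x y / Real.sqrt (F x * F y) := log_le_aux hnn
          _ ≤ tA := hsxy
      have hsupnn : 0 ≤ sSup ((fun y => hDHV c F x y) '' {y | y ∉ M ∧ dist x y ≤ r}) := by
        apply Real.sSup_nonneg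
        rintro z ⟨y, ⟨hyM, hyd⟩, rfl⟩
        have hFy : 0 < F y := hFpos y hyM
        apply Real.log_nonneg
        have : 0 ≤ c * dist x y / Real.sqrt (F x * F y) := by positivity
        linarith
      -- inf bound
      have hinfmem : hDHV c F x y0 ∈ (fun y => hDHV c F x y) '' {y | y ∉ M ∧ r ≤ dist x y} :=
        ⟨y0, ⟨hy0M, hrρ.le⟩, rfl⟩
      have hinf : tB / (1 + tB) ≤ sInf ((fun y => hDHV c F x y) '' {y | y ∉ M ∧ r ≤ dist x y}) := by
        apply le_csInf ⟨_, hinfmem⟩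
        rintro z ⟨y, ⟨hyM, hyd⟩, rfl⟩
        have hFy : 0 < F y := hFpos y hyM
        have hFyub : F y ≤ F x + dist x y := by
          have := abs_le.1 (hFlip x hx y hyM)
          linarith [this.2]
        have hstep1 : c * dist x y / Real.sqrt (F x * (F x + dist x y)) ≤
            c * dist x y / Real.sqrt (F x * F y) := by
          apply div_le_div_of_nonneg_left (by positivity) (Real.sqrt_pos.2 (by positivity))
          exact Real.sqrt_le_sqrt (by nlinarith)
        have hstep2 := mono_aux hFx hc0.le hr0.le hyd
        have hsxy : tB ≤ c * dist x y / Real.sqrt (F x * F y) := by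
          rw [htB]; linarith
        have hlog1 : Real.log (1 + tB) ≤ Real.log (1 + c * dist x y / Real.sqrt (F x * F y)) := by
          apply Real.log_le_log (by linarith)
          linarith
        calc tB / (1 + tB) ≤ Real.log (1 + tB) := log_ge_aux htB0.le
          _ ≤ hDHV c F x y := hlog1
      constructor
      · calc sSup ((fun y => hDHV c F x y) '' {y | y ∉ M ∧ dist x y ≤ r}) /
              sInf ((fun y => hDHV c F x y) '' {y | y ∉ M ∧ r ≤ dist x y})
            ≤ tA / (tB / (1 + tB)) := div_le_div₀ htA0.le hsup hB0 hinf
          _ = g r := by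
              rw [hg, htA, htB]
              exact alg_aux hsA.ne' hsB.ne' (by positivity) (by positivity)
      · exact div_nonneg hsupnn (le_trans hB0.le hinf)
    -- conclude
    have hb : (nhdsWithin (0:ℝ) (Set.Ioi 0)).IsBoundedUnder (· ≥ ·)
        (fun r : ℝ =>
          sSup ((fun y => hDHV c F x y) '' {y | y ∉ M ∧ dist x y ≤ r}) /
          sInf ((fun y => hDHV c F x y) '' {y | y ∉ M ∧ r ≤ dist x y})) :=
      ⟨0, eventually_map.2 (by filter_upwards [hbound] with r h using h.2)⟩
    calc Filter.limsup _ (nhdsWithin (0:ℝ) (Set.Ioi 0))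
        ≤ Filter.limsup g (nhdsWithin (0:ℝ) (Set.Ioi 0)) :=
          Filter.limsup_le_limsup (hbound.mono fun r h => h.1) hb.isCoboundedUnder_le
            htg.isBoundedUnder_le
      _ = 1 := htg.limsup_eq


theorem stmt_9 {X : Type*} [MetricSpace X] (M : Set X)
    (hMclosed : IsClosed M) (hMne : M.Nonempty) (hMproper : M ≠ Set.univ)
    (F : X → ℝ) (hFpos : ∀ x ∉ M, 0 < F x)
    (hFlip : ∀ x ∉ M, ∀ y ∉ M, |F x - F y| ≤ dist x y)
    (c : ℝ) (hc : 2 ≤ c) :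
    -- the identity map `(X∖M, d) → (X∖M, h_c)` is a homeomorphism
    (∀ x ∉ M, ∀ u : ℕ → X, (∀ n, u n ∉ M) →
      (Tendsto (fun n => dist (u n) x) atTop (nhds 0) ↔
        Tendsto (fun n => hDHV c F (u n) x) atTop (nhds 0))) ∧
    -- and it is 1-quasiconformal
    (∀ x ∉ M,
      Filter.limsup
        (fun r : ℝ =>
          sSup ((fun y => hDHV c F x y) '' {y | y ∉ M ∧ dist x y ≤ r}) /
          sInf ((fun y => hDHV c F x y) '' {y | y ∉ M ∧ r ≤ dist x y}))
        (nhdsWithin (0 : ℝ) (Set.Ioi 0)) ≤ 1) :=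
  ⟨fun x hx u hu => part1 hFpos hFlip hc hx u hu,
   fun x hx => part2 hFpos hFlip hc hx⟩
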